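/- arXiv:1801.10440 — 3 statements merged into one kernel-verified Lean document; each statement's English description precedes it below -/
import Mathlib

section
/- Let γ : ℝ → ℝ² be C² with |γ'(s)| = 1 for all s, set ν(s) = (γ₂'(s), −γ₁'(s), 0) ∈ ℝ³, and let κ : ℝ → ℝ satisfy (γ₂''(s), −γ₁''(s)) = κ(s)·γ'(s) for all s. Let a, b : ℝ³ → ℂ³ be C¹ on an open neighborhood of the cylindrical surface S = {(γ₁(s), γ₂(s), t) : s, t ∈ ℝ}, and suppose that for all s, t the normal components vanish: Σₖ aₖ(γ(s), t)·νₖ(s) = 0 and Σₖ bₖ(γ(s), t)·νₖ(s) = 0. Then at every point x = (γ(s), t), one has Σₖ νₖ(s)·aₖ(x)·conj((div b)(x)) − Σⱼₖ νⱼ(s)·aₖ(x)·conj((∂ₖbⱼ)(x)) = κ(s)·(a₁(x)·conj(b₁(x)) + a₂(x)·conj(b₂(x))). -/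
noncomputable section

open MeasureTheory Real Complex

/-- Points of `ℝ³`. -/
abbrev V3 := Fin 3 → ℝ
/-- Vectors of `ℂ³`. -/
abbrev C3 := Fin 3 → ℂ

/-- Partial derivative `∂ⱼ` of a complex scalar function on `ℝ³`. -/
def pd (j : Fin 3) (f : V3 → ℂ) (x : V3) : ℂ := fderiv ℝ f x (Pi.single j 1)

/-- Partial derivative `∂ⱼ` of a real scalar function on `ℝ³`. -/
def pdR (j : Fin 3) (f : V3 → ℝ) (x : V3) : ℝ := fderiv ℝ f x (Pi.single j 1)

/-- Partial derivative `∂ⱼ` of a vector field, taken componentwise. -/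
def pdV (j : Fin 3) (a : V3 → C3) (x : V3) : C3 := fun i => pd j (fun y => a y i) x

/-- curl a = (∂₂a₃ − ∂₃a₂, ∂₃a₁ − ∂₁a₃, ∂₁a₂ − ∂₂a₁)  (indices 0,1,2). -/
def vcurl (a : V3 → C3) (x : V3) : C3 :=
  ![pd 1 (fun y => a y 2) x - pd 2 (fun y => a y 1) x,
    pd 2 (fun y => a y 0) x - pd 0 (fun y => a y 2) x,
    pd 0 (fun y => a y 1) x - pd 1 (fun y => a y 0) x]

/-- div a = ∂₁a₁ + ∂₂a₂ + ∂₃a₃. -/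
def vdiv (a : V3 → C3) (x : V3) : ℂ := ∑ j, pd j (fun y => a y j) x

/-- The bilinear (unconjugated) cross product on ℂ³. -/
def cross (a b : C3) : C3 :=
  ![a 1 * b 2 - a 2 * b 1, a 2 * b 0 - a 0 * b 2, a 0 * b 1 - a 1 * b 0]

/-- The Hermitian inner product ⟨a, b⟩ = Σⱼ aⱼ · conj(bⱼ). -/
def hinner (a b : C3) : ℂ := ∑ j, a j * (starRingEnd ℂ) (b j)

/-- The gradient of a real function, viewed as a complex vector. -/
def gradC (g : V3 → ℝ) (x : V3) : C3 := fun j => (pdR j g x : ℂ)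

/-- The Laplacian Δg = ∂₁²g + ∂₂²g + ∂₃²g of a real function. -/
def lapR (g : V3 → ℝ) (x : V3) : ℝ := ∑ j, pdR j (fun y => pdR j g y) x

/-- The solid infinite circular cylinder Π of radius `R`. -/
def Cyl (R : ℝ) : Set V3 := {x | x 0 ^ 2 + x 1 ^ 2 < R ^ 2}

/-- The boundary ∂Π of the cylinder. -/
def bCyl (R : ℝ) : Set V3 := {x | x 0 ^ 2 + x 1 ^ 2 = R ^ 2}

/-- The outward unit normal of the cylinder at a boundary point. -/
def nuR (R : ℝ) (x : V3) : V3 := ![x 0 / R, x 1 / R, 0]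

/-- The outward unit normal, viewed as a complex vector. -/
def nuC (R : ℝ) (x : V3) : C3 := fun j => (nuR R x j : ℂ)

/-- The normal component ⟨z, ν⟩ of z ∈ ℂ³ at a boundary point of the cylinder. -/
def ncomp (R : ℝ) (x : V3) (z : C3) : ℂ := ∑ k, z k * (nuR R x k : ℂ)

/-- The normal derivative ∂_ν g = ⟨∇g, ν⟩ of a real function at a boundary point. -/
def dnu (R : ℝ) (g : V3 → ℝ) (x : V3) : ℝ := ∑ k, pdR k g x * nuR R x k

/-- The surface integral ∫_{∂Π} F dS = ∫_ℝ ∫₀^{2π} F(R cos θ, R sin θ, t)·R dθ dt. -/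
def surfInt (R : ℝ) (F : V3 → ℂ) : ℂ :=
  ∫ t : ℝ, ∫ θ in (0:ℝ)..(2 * π), F ![R * Real.cos θ, R * Real.sin θ, t] * (R : ℂ)

/-- `f` is `C^k` up to the boundary of the open set `S`: it is `k` times continuously
differentiable on an open neighborhood of the closure of `S`. -/
def UpTo {E : Type*} [NormedAddCommGroup E] [NormedSpace ℝ E]
    (k : ℕ) (S : Set V3) (f : V3 → E) : Prop :=
  ∃ U : Set V3, IsOpen U ∧ closure S ⊆ U ∧ ContDiffOn ℝ k f U

/-- `f` has compact axial support: it vanishes whenever `|x₃| ≥ T` for some `T > 0`. -/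
def AxialSupp {E : Type*} [Zero E] (f : V3 → E) : Prop :=
  ∃ T > 0, ∀ x : V3, T ≤ |x 2| → f x = 0

/-- The matrix W₀(μ)ⱼₖ = μ⁻¹(Δμ)δⱼₖ + μ⁻²(∂ⱼμ)(∂ₖμ) − μ⁻¹∂ⱼ∂ₖμ. -/
def W0 (μ : V3 → ℝ) (x : V3) (j k : Fin 3) : ℝ :=
  (μ x)⁻¹ * lapR μ x * (if j = k then 1 else 0)
    + ((μ x) ^ 2)⁻¹ * pdR j μ x * pdR k μ x
    - (μ x)⁻¹ * pdR j (fun y => pdR k μ y) x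

/-- The matrix W(μ)ⱼₖ = ((2μ)⁻¹Δμ − (4μ²)⁻¹|∇μ|²)δⱼₖ + μ⁻²(∂ⱼμ)(∂ₖμ) − μ⁻¹∂ⱼ∂ₖμ. -/
def Wm (μ : V3 → ℝ) (x : V3) (j k : Fin 3) : ℝ :=
  ((2 * μ x)⁻¹ * lapR μ x - (4 * (μ x) ^ 2)⁻¹ * (∑ i, (pdR i μ x) ^ 2))
      * (if j = k then 1 else 0)
    + ((μ x) ^ 2)⁻¹ * pdR j μ x * pdR k μ x
    - (μ x)⁻¹ * pdR j (fun y => pdR k μ y) x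


/-- The point (γ₁(s), γ₂(s), t) on the cylindrical surface over the curve γ. -/
def ptC (γ : ℝ → Fin 2 → ℝ) (s t : ℝ) : V3 := ![γ s 0, γ s 1, t]

/-- The normal ν(s) = (γ₂'(s), −γ₁'(s), 0) to the curve γ, viewed in ℝ³. -/
def nuγ (γ : ℝ → Fin 2 → ℝ) (s : ℝ) : V3 :=
  ![deriv γ s 1, -deriv γ s 0, 0]

/-- A real-linear map `V3 →L[ℝ] ℂ` applied to a vector is the sum of the partials. -/
lemma fderiv_pt (f : V3 → ℂ) (x v : V3) :
    fderiv ℝ f x v = ∑ k, (v k : ℂ) * pd k f x := by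
  have hv : v = ∑ k : Fin 3, v k • (Pi.single k 1 : V3) := by
    ext i
    simp [Finset.sum_apply, Pi.single_apply]
  calc fderiv ℝ f x v = fderiv ℝ f x (∑ k : Fin 3, v k • (Pi.single k 1 : V3)) := by rw [← hv]
    _ = ∑ k, (v k : ℂ) * pd k f x := by
        rw [map_sum]
        refine Finset.sum_congr rfl fun k _ => ?_
        rw [ContinuousLinearMap.map_smul]
        simp [pd, Complex.real_smul]

/-- boundary identity I(x) = κ(s)·⟨P a, b⟩ for fields with vanishing normal
components on the cylindrical surface over a unit-speed curve γ. -/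
theorem statement3 (γ : ℝ → Fin 2 → ℝ) (κ : ℝ → ℝ)
    (hγ : ContDiff ℝ 2 γ)
    (hunit : ∀ s, (deriv γ s 0) ^ 2 + (deriv γ s 1) ^ 2 = 1)
    (hκ : ∀ s, deriv (fun u => deriv γ u 1) s = κ s * deriv γ s 0
             ∧ -deriv (fun u => deriv γ u 0) s = κ s * deriv γ s 1)
    (a b : V3 → C3) (U : Set V3) (hU : IsOpen U)
    (hSU : ∀ s t : ℝ, ptC γ s t ∈ U)
    (ha : ContDiffOn ℝ 1 a U) (hb : ContDiffOn ℝ 1 b U)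
    (han : ∀ s t : ℝ, ∑ k, a (ptC γ s t) k * (nuγ γ s k : ℂ) = 0)
    (hbn : ∀ s t : ℝ, ∑ k, b (ptC γ s t) k * (nuγ γ s k : ℂ) = 0)
    (s t : ℝ) :
    ∑ k, (nuγ γ s k : ℂ) * a (ptC γ s t) k * (starRingEnd ℂ) (vdiv b (ptC γ s t))
      - ∑ j, ∑ k, (nuγ γ s j : ℂ) * a (ptC γ s t) k
          * (starRingEnd ℂ) (pd k (fun y => b y j) (ptC γ s t))
    = (κ s : ℂ) * (a (ptC γ s t) 0 * (starRingEnd ℂ) (b (ptC γ s t) 0)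
        + a (ptC γ s t) 1 * (starRingEnd ℂ) (b (ptC γ s t) 1)) := by
  set x : V3 := ptC γ s t with hxdef
  have hxU : x ∈ U := hSU s t
  have hbd : DifferentiableAt ℝ b x :=
    (hb.contDiffAt (hU.mem_nhds hxU)).differentiableAt one_ne_zero
  have hbdj : ∀ j : Fin 3, DifferentiableAt ℝ (fun y => b y j) x :=
    fun j => differentiableAt_pi.mp hbd j
  have h1le2 : (1 : WithTop ℕ∞) ≤ 2 := by norm_num
  have hγdiff : Differentiable ℝ γ := hγ.differentiable two_ne_zero
  have hγ' : ContDiff ℝ 1 (deriv γ) := by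
    have h2 : ContDiff ℝ ((1 : ℕ) + 1 : ℕ) γ := by exact_mod_cast hγ
    exact (contDiff_succ_iff_deriv.mp (by exact_mod_cast h2)).2.2
  have hdg : Differentiable ℝ (deriv γ) := hγ'.differentiable one_ne_zero
  have hdgc : ∀ (u : ℝ) (i : Fin 2), HasDerivAt (fun w => γ w i) (deriv γ u i) u :=
    fun u i => hasDerivAt_pi.mp (hγdiff u).hasDerivAt i
  have hddgc : ∀ (u : ℝ) (i : Fin 2),
      HasDerivAt (fun w => deriv γ w i) (deriv (deriv γ) u i) u :=
    fun u i => hasDerivAt_pi.mp (hdg u).hasDerivAt i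
  have hk1 : deriv (deriv γ) s 1 = κ s * deriv γ s 0 := by
    rw [← (hddgc s 1).deriv]; exact (hκ s).1
  have hk0 : deriv (deriv γ) s 0 = -(κ s * deriv γ s 1) := by
    have h := (hκ s).2
    rw [← (hddgc s 0).deriv]; linarith
  set v : V3 := ![deriv γ s 0, deriv γ s 1, 0] with hvdef
  -- derivative of the curve s ↦ ptC γ s t
  have hc : HasDerivAt (fun u => ptC γ u t) v s := by
    apply hasDerivAt_pi.mpr
    intro i
    fin_cases i
    · simpa [ptC, hvdef] using hdgc s 0
    · simpa [ptC, hvdef] using hdgc s 1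
    · simpa [ptC, hvdef] using hasDerivAt_const s t
  have hcomp : ∀ j : Fin 3, HasDerivAt (fun u => b (ptC γ u t) j)
      (fderiv ℝ (fun y => b y j) x v) s := by
    intro j
    exact ((hbdj j).hasFDerivAt.comp_hasDerivAt s hc)
  -- derivative of ν components
  have hν : ∀ j : Fin 3, HasDerivAt (fun u => nuγ γ u j) (κ s * v j) s := by
    intro j
    fin_cases j
    · have := hddgc s 1
      rw [hk1] at this
      simpa [nuγ, hvdef] using this
    · have := (hddgc s 0).fun_neg
      rw [hk0] at this
      simpa [nuγ, hvdef] using this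
    · simpa [nuγ, hvdef] using hasDerivAt_const s (0:ℝ)
  -- s-derivative of the vanishing normal component of b
  have hGd : HasDerivAt (fun u => ∑ k, b (ptC γ u t) k * ((nuγ γ u k : ℝ) : ℂ))
      (∑ k, (fderiv ℝ (fun y => b y k) x v * ((nuγ γ s k : ℝ) : ℂ)
            + b x k * ((κ s * v k : ℝ) : ℂ))) s := by
    apply HasDerivAt.fun_sum
    intro k _
    exact (hcomp k).mul ((hν k).ofReal_comp)
  have hbnfun : ∀ u : ℝ, (∑ k, b (ptC γ u t) k * ((nuγ γ u k : ℝ) : ℂ)) = 0 :=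
    fun u => hbn u t
  have hDs : (∑ k, (fderiv ℝ (fun y => b y k) x v * ((nuγ γ s k : ℝ) : ℂ)
            + b x k * ((κ s * v k : ℝ) : ℂ))) = 0 := by
    have h0 : HasDerivAt (fun _ : ℝ => (0:ℂ)) 0 s := hasDerivAt_const s 0
    simp only [hbnfun] at hGd
    exact hGd.unique h0
  -- t-derivative of the vanishing normal component of b
  set e : V3 := Pi.single 2 1 with hedef
  have hct : HasDerivAt (fun u => ptC γ s u) e t := by
    apply hasDerivAt_pi.mpr
    intro i
    fin_cases i
    · simpa [ptC, hedef, Pi.single_apply] using hasDerivAt_const t (γ s 0)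
    · simpa [ptC, hedef, Pi.single_apply] using hasDerivAt_const t (γ s 1)
    · simpa [ptC, hedef, Pi.single_apply] using hasDerivAt_id' t
  have hHd : HasDerivAt (fun u => ∑ k, b (ptC γ s u) k * ((nuγ γ s k : ℝ) : ℂ))
      (∑ k, fderiv ℝ (fun y => b y k) x e * ((nuγ γ s k : ℝ) : ℂ)) t := by
    apply HasDerivAt.fun_sum
    intro k _
    simpa using (((hbdj k).hasFDerivAt.comp_hasDerivAt t hct).mul_const
      ((nuγ γ s k : ℝ) : ℂ))
  have hDt : (∑ k, fderiv ℝ (fun y => b y k) x e * ((nuγ γ s k : ℝ) : ℂ)) = 0 := by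
    have h0 : HasDerivAt (fun _ : ℝ => (0:ℂ)) 0 t := hasDerivAt_const t 0
    have hbnfun2 : ∀ u : ℝ, (∑ k, b (ptC γ s u) k * ((nuγ γ s k : ℝ) : ℂ)) = 0 :=
      fun u => hbn s u
    simp only [hbnfun2] at hHd
    exact hHd.unique h0
  -- conjugate and expand the two derivative identities
  have hpde : ∀ k : Fin 3, fderiv ℝ (fun y => b y k) x e = pd 2 (fun y => b y k) x := by
    intro k; rw [hedef]; rfl
  have key2 := congrArg (starRingEnd ℂ) hDt
  have key1 := congrArg (starRingEnd ℂ) hDs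
  simp only [fderiv_pt, hpde] at key1 key2
  simp only [Fin.sum_univ_three, nuγ, hvdef, Matrix.cons_val_zero, Matrix.cons_val_one,
    Matrix.head_cons, Matrix.cons_val_two, Matrix.tail_cons, map_add, map_mul, map_sum,
    map_zero, Complex.conj_ofReal, Complex.ofReal_neg, Complex.ofReal_zero, Complex.ofReal_mul,
    map_neg, mul_zero, zero_mul, add_zero, neg_zero, mul_neg, neg_mul] at key1 key2
  have hanx := han s t
  have hu : ((deriv γ s 0 : ℝ) : ℂ) ^ 2 + ((deriv γ s 1 : ℝ) : ℂ) ^ 2 = 1 := by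
    exact_mod_cast congrArg (fun r : ℝ => (r : ℂ)) (hunit s)
  simp only [Fin.sum_univ_three, nuγ, Matrix.cons_val_zero, Matrix.cons_val_one,
    Matrix.head_cons, Matrix.cons_val_two, Matrix.tail_cons, Complex.ofReal_neg,
    Complex.ofReal_zero, mul_zero, zero_mul, add_zero] at hanx ⊢
  simp only [vdiv, map_sum, map_add, map_neg, map_mul, Complex.conj_ofReal,
    Fin.sum_univ_three]
  set T0 : ℂ := ((deriv γ s 0 : ℝ) : ℂ)
  set T1 : ℂ := ((deriv γ s 1 : ℝ) : ℂ)
  set K : ℂ := ((κ s : ℝ) : ℂ)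
  set A0 : ℂ := a x 0
  set A1 : ℂ := a x 1
  set A2 : ℂ := a x 2
  set B0 : ℂ := (starRingEnd ℂ) (b x 0)
  set B1 : ℂ := (starRingEnd ℂ) (b x 1)
  set D00 : ℂ := (starRingEnd ℂ) (pd 0 (fun y => b y 0) x)
  set D01 : ℂ := (starRingEnd ℂ) (pd 1 (fun y => b y 0) x)
  set D02 : ℂ := (starRingEnd ℂ) (pd 2 (fun y => b y 0) x)
  set D10 : ℂ := (starRingEnd ℂ) (pd 0 (fun y => b y 1) x)
  set D11 : ℂ := (starRingEnd ℂ) (pd 1 (fun y => b y 1) x)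
  set D12 : ℂ := (starRingEnd ℂ) (pd 2 (fun y => b y 1) x)
  set D22 : ℂ := (starRingEnd ℂ) (pd 2 (fun y => b y 2) x)
  linear_combination (D00 + D11 + D22) * hanx - (A0 * T0 + A1 * T1) * key1 - A2 * key2
    + (-A0 * (-T1 * D00 + T0 * D10 - K * B0) - A1 * (-T1 * D01 + T0 * D11 - K * B1)) * hu
    + (T1 * (-T1 * D00 + T0 * D10 - K * B0) - T0 * (-T1 * D01 + T0 * D11 - K * B1)) * hanx

end
end

section
/- Let γ : ℝ → ℝ² be C² with |γ'(s)| = 1 for all s, set ν(s) = (γ₂'(s), −γ₁'(s), 0) ∈ ℝ³, and let κ : ℝ → ℝ satisfy (γ₂''(s), −γ₁''(s)) = κ(s)·γ'(s) for all s. Let a, b : ℝ³ → ℂ³ be C¹ on an open neighborhood of the cylindrical surface S = {(γ₁(s), γ₂(s), t) : s, t ∈ ℝ}, and suppose that for all s, t the tangential components vanish: a(γ(s), t) = (Σₖ aₖ(γ(s), t)·νₖ(s))·ν(s) and b(γ(s), t) = (Σₖ bₖ(γ(s), t)·νₖ(s))·ν(s). Then at every point x = (γ(s), t), one has Σₖ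 νₖ(s)·aₖ(x)·conj((div b)(x)) − Σⱼₖ νⱼ(s)·aₖ(x)·conj((∂ₖbⱼ)(x)) = κ(s)·⟨a(x), b(x)⟩. -/
noncomputable section

open MeasureTheory Real Complex

/-- boundary identity I(x) = κ(s)·⟨a, b⟩ for fields with vanishing tangential
components on the cylindrical surface over a unit-speed curve γ. -/
theorem statement4 (γ : ℝ → Fin 2 → ℝ) (κ : ℝ → ℝ)
    (hγ : ContDiff ℝ 2 γ)
    (hunit : ∀ s, (deriv γ s 0) ^ 2 + (deriv γ s 1) ^ 2 = 1)
    (hκ : ∀ s, deriv (fun u => deriv γ u 1) s = κ s * deriv γ s 0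
             ∧ -deriv (fun u => deriv γ u 0) s = κ s * deriv γ s 1)
    (a b : V3 → C3) (U : Set V3) (hU : IsOpen U)
    (hSU : ∀ s t : ℝ, ptC γ s t ∈ U)
    (ha : ContDiffOn ℝ 1 a U) (hb : ContDiffOn ℝ 1 b U)
    (hat : ∀ s t : ℝ, ∀ i,
      a (ptC γ s t) i = (∑ k, a (ptC γ s t) k * (nuγ γ s k : ℂ)) * (nuγ γ s i : ℂ))
    (hbt : ∀ s t : ℝ, ∀ i,
      b (ptC γ s t) i = (∑ k, b (ptC γ s t) k * (nuγ γ s k : ℂ)) * (nuγ γ s i : ℂ))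
    (s t : ℝ) :
    ∑ k, (nuγ γ s k : ℂ) * a (ptC γ s t) k * (starRingEnd ℂ) (vdiv b (ptC γ s t))
      - ∑ j, ∑ k, (nuγ γ s j : ℂ) * a (ptC γ s t) k
          * (starRingEnd ℂ) (pd k (fun y => b y j) (ptC γ s t))
    = (κ s : ℂ) * hinner (a (ptC γ s t)) (b (ptC γ s t)) := by
  classical
  -- differentiability facts
  have hbd : DifferentiableAt ℝ b (ptC γ s t) :=
    (hb.differentiableOn one_ne_zero).differentiableAt (hU.mem_nhds (hSU s t))
  have hbdj : ∀ j, DifferentiableAt ℝ (fun y => b y j) (ptC γ s t) :=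
    differentiableAt_pi.mp hbd
  have hγ2 : ContDiff ℝ ((1:WithTop ℕ∞) + 1) γ := by norm_num; exact hγ
  have hdγ : Differentiable ℝ (deriv γ) :=
    ((contDiff_succ_iff_deriv.mp hγ2).2.2).differentiable one_ne_zero
  have hγd : HasDerivAt γ (deriv γ s) s :=
    ((hγ.differentiable (by norm_num)) s).hasDerivAt
  -- curve in s direction
  have hcurve : HasDerivAt (fun u => ptC γ u t)
      (![deriv γ s 0, deriv γ s 1, 0]) s := by
    rw [hasDerivAt_pi]
    intro i
    fin_cases i
    · simpa [ptC] using hasDerivAt_pi.mp hγd 0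
    · simpa [ptC] using hasDerivAt_pi.mp hγd 1
    · simpa [ptC] using hasDerivAt_const s t
  have hvec : (![deriv γ s 0, deriv γ s 1, 0] : V3)
      = deriv γ s 0 • (Pi.single 0 1 : V3) + deriv γ s 1 • (Pi.single 1 1 : V3) := by
    funext i; fin_cases i <;> simp [Pi.single_apply]
  -- chain rule rows
  have hMrow : ∀ j : Fin 3, HasDerivAt (fun u => b (ptC γ u t) j)
      ((deriv γ s 0 : ℂ) * pd 0 (fun y => b y j) (ptC γ s t)
        + (deriv γ s 1 : ℂ) * pd 1 (fun y => b y j) (ptC γ s t)) s := by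
    intro j
    have hL := (hbdj j).hasFDerivAt
    have h2 := hL.comp_hasDerivAt s hcurve
    simp only [Function.comp_def] at h2
    rw [hvec, map_add] at h2
    simp only [ContinuousLinearMap.map_smul] at h2
    simpa [pd, Complex.real_smul] using h2
  -- derivatives of nu components
  have h1 : HasDerivAt (fun u => deriv γ u 1) (κ s * deriv γ s 0) s := by
    have := (differentiableAt_pi.mp (hdγ s) 1).hasDerivAt
    rwa [(hκ s).1] at this
  have h0 : HasDerivAt (fun u => deriv γ u 0) (-(κ s * deriv γ s 1)) s := by
    have := (differentiableAt_pi.mp (hdγ s) 0).hasDerivAt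
    rwa [show deriv (fun u => deriv γ u 0) s = -(κ s * deriv γ s 1) by
      linarith [(hκ s).2]] at this
  have hν0 : HasDerivAt (fun u => ((nuγ γ u 0 : ℝ) : ℂ)) ((κ s * deriv γ s 0 : ℝ) : ℂ) s := by
    apply h1.ofReal_comp.congr_of_eventuallyEq
    filter_upwards with u; simp [nuγ]
  have hν1 : HasDerivAt (fun u => ((nuγ γ u 1 : ℝ) : ℂ)) ((κ s * deriv γ s 1 : ℝ) : ℂ) s := by
    have := (h0.neg).ofReal_comp
    simp only [neg_neg] at this
    apply this.congr_of_eventuallyEq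
    filter_upwards with u; simp [nuγ]
  have hν2 : HasDerivAt (fun u => ((nuγ γ u 2 : ℝ) : ℂ)) 0 s := by
    apply (hasDerivAt_const s ((0:ℝ):ℂ)).congr_of_eventuallyEq
    filter_upwards with u; simp [nuγ]
  -- derivative of B(u)
  obtain ⟨dB, hBf⟩ : ∃ d, HasDerivAt
      (fun u => ∑ k : Fin 3, b (ptC γ u t) k * ((nuγ γ u k : ℝ) : ℂ)) d s := by
    refine ⟨_, ((((hMrow 0).mul hν0).add ((hMrow 1).mul hν1)).add
      ((hMrow 2).mul hν2)).congr_of_eventuallyEq ?_⟩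
    filter_upwards with u
    simp [Fin.sum_univ_three]
  set B : ℂ := ∑ k : Fin 3, b (ptC γ s t) k * ((nuγ γ s k : ℝ) : ℂ) with hBdef
  -- row identities
  have hE0 : (deriv γ s 0 : ℂ) * pd 0 (fun y => b y 0) (ptC γ s t)
        + (deriv γ s 1 : ℂ) * pd 1 (fun y => b y 0) (ptC γ s t)
      = dB * ((nuγ γ s 0 : ℝ) : ℂ) + B * ((κ s * deriv γ s 0 : ℝ) : ℂ) := by
    refine (hMrow 0).unique ((hBf.mul hν0).congr_of_eventuallyEq ?_)
    filter_upwards with u; exact hbt u t 0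
  have hE1 : (deriv γ s 0 : ℂ) * pd 0 (fun y => b y 1) (ptC γ s t)
        + (deriv γ s 1 : ℂ) * pd 1 (fun y => b y 1) (ptC γ s t)
      = dB * ((nuγ γ s 1 : ℝ) : ℂ) + B * ((κ s * deriv γ s 1 : ℝ) : ℂ) := by
    refine (hMrow 1).unique ((hBf.mul hν1).congr_of_eventuallyEq ?_)
    filter_upwards with u; exact hbt u t 1
  -- t direction: ∂₂ b₂ = 0
  have hcurve2 : HasDerivAt (fun u => ptC γ s u) (Pi.single 2 1) t := by
    rw [hasDerivAt_pi]
    intro i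
    fin_cases i
    · simpa [ptC, Pi.single_apply] using hasDerivAt_const t (γ s 0)
    · simpa [ptC, Pi.single_apply] using hasDerivAt_const t (γ s 1)
    · simpa [ptC, Pi.single_apply] using hasDerivAt_id' t
  have hM22 : pd 2 (fun y => b y 2) (ptC γ s t) = 0 := by
    have h2 := ((hbdj 2).hasFDerivAt).comp_hasDerivAt t hcurve2
    simp only [Function.comp_def] at h2
    refine h2.unique ((hasDerivAt_const t (0:ℂ)).congr_of_eventuallyEq ?_)
    filter_upwards with u
    rw [hbt s u 2]; simp [nuγ]
  -- conjugated versions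
  have hE0c := congrArg (starRingEnd ℂ) hE0
  have hE1c := congrArg (starRingEnd ℂ) hE1
  have hM22c := congrArg (starRingEnd ℂ) hM22
  simp only [map_add, map_mul, Complex.conj_ofReal, map_zero, Complex.ofReal_mul] at hE0c hE1c hM22c
  -- main algebra
  have hn0 : nuγ γ s 0 = deriv γ s 1 := by simp [nuγ]
  have hn1 : nuγ γ s 1 = -deriv γ s 0 := by simp [nuγ]
  have hn2 : nuγ γ s 2 = 0 := by simp [nuγ]
  have hA0 := hat s t
  have hB0 := hbt s t
  simp only [vdiv, hinner, Fin.sum_univ_three]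
  rw [hA0 0, hA0 1, hA0 2, hB0 0, hB0 1, hB0 2, ← hBdef]
  set A : ℂ := ∑ k : Fin 3, a (ptC γ s t) k * ((nuγ γ s k : ℝ) : ℂ) with hAdef
  simp only [hn0, hn1, hn2] at hE0c hE1c ⊢
  simp only [Complex.ofReal_neg, Complex.ofReal_zero, map_neg, map_add, map_mul,
    map_zero, Complex.conj_ofReal, mul_zero, zero_mul, neg_zero, mul_neg, neg_mul,
    sub_zero, add_zero, zero_add, neg_neg] at hE0c hE1c ⊢
  linear_combination (A * (deriv γ s 0 : ℂ)) * hE0c + (A * (deriv γ s 1 : ℂ)) * hE1c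
    + (A * ((deriv γ s 0 : ℂ)^2 + (deriv γ s 1 : ℂ)^2)) * hM22c

end
end

section
/- Let a, b : ℝ³ → ℂ³ be C² up to the boundary of Π', with a of compact axial support, and suppose that on each open face of ∂Π' either (i) ⟨a, ν⟩ = ⟨b, ν⟩ = 0, or (ii) a = ⟨a, ν⟩·ν and b = ⟨b, ν⟩·ν, where ν is the outward unit normal of that face. Then ∫_{Π'} ⟨curl a, curl b⟩ dx = ∫_{Π'} Σⱼ ⟨∂ⱼa, ∂ⱼb⟩ dx − ∫_{Π'} (div a)·conj(div b) dx (the boundary term vanishes since each face is flat). -/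
noncomputable section

open MeasureTheory Real Complex

/-- The solid infinite cylinder Π' = (0, l₁) × (0, l₂) × ℝ with rectangular cross-section. -/
def Rect (l1 l2 : ℝ) : Set V3 := {x | 0 < x 0 ∧ x 0 < l1 ∧ 0 < x 1 ∧ x 1 < l2}

/-- The normal component ⟨z, n⟩ of z ∈ ℂ³ with respect to a real unit vector n. -/
def ncompV (n : V3) (z : C3) : ℂ := ∑ k, z k * (n k : ℂ)

/-- Boundary condition on a face F with outward unit normal n: either both normal components
of a and b vanish on F, or both tangential components of a and b vanish on F. -/
def BCface (a b : V3 → C3) (F : Set V3) (n : V3) : Prop :=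
  (∀ x ∈ F, ncompV n (a x) = 0 ∧ ncompV n (b x) = 0) ∨
  (∀ x ∈ F, (∀ i, a x i = ncompV n (a x) * (n i : ℂ)) ∧
            (∀ i, b x i = ncompV n (b x) * (n i : ℂ)))


open Filter Set

lemma pd_congr_zero {f : V3 → ℂ} {x : V3} (h : ∀ᶠ y in nhds x, f y = 0) (k : Fin 3) :
    pd k f x = 0 := by
  have h' : f =ᶠ[nhds x] (fun _ : V3 => (0:ℂ)) := h
  rw [pd, h'.fderiv_eq]
  simp

lemma pd_zero_of_line {g : V3 → ℂ} {x : V3} (hg : DifferentiableAt ℝ g x) (k : Fin 3)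
    (h : ∀ᶠ t : ℝ in nhds (0:ℝ), g (x + t • (Pi.single k 1 : V3)) = 0) : pd k g x = 0 := by
  set v : V3 := (Pi.single k 1 : V3) with hv
  have hc : HasDerivAt (fun t : ℝ => x + t • v) v 0 := by
    simpa using ((hasDerivAt_id (0:ℝ)).smul_const v).const_add x
  have hx0 : x + (0:ℝ) • v = x := by simp
  have H : HasDerivAt (fun t : ℝ => g (x + t • v)) (fderiv ℝ g x v) 0 := by
    have hg' : HasFDerivAt g (fderiv ℝ g x) ((fun t : ℝ => x + t • v) 0) := by
      simpa [hx0] using hg.hasFDerivAt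
    exact hg'.comp_hasDerivAt 0 hc
  have H0 : HasDerivAt (fun t : ℝ => g (x + t • v)) 0 0 := by
    have h0 : (fun t : ℝ => g (x + t • v)) =ᶠ[nhds (0:ℝ)] (fun _ => (0:ℂ)) := h
    exact (hasDerivAt_const (0:ℝ) (0:ℂ)).congr_of_eventuallyEq h0
  have := H.unique H0
  simpa [pd] using this

lemma pd_sub {f g : V3 → ℂ} {x : V3} (hf : DifferentiableAt ℝ f x)
    (hg : DifferentiableAt ℝ g x) (k : Fin 3) :
    pd k (fun y => f y - g y) x = pd k f x - pd k g x := by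
  rw [pd, fderiv_fun_sub hf hg]; rfl

lemma pd_mul {f g : V3 → ℂ} {x : V3} (hf : DifferentiableAt ℝ f x)
    (hg : DifferentiableAt ℝ g x) (k : Fin 3) :
    pd k (fun y => f y * g y) x = pd k f x * g x + f x * pd k g x := by
  rw [pd, fderiv_fun_mul hf hg]
  simp [pd, smul_eq_mul]
  ring

lemma pd_sum {ι : Type*} (s : Finset ι) {f : ι → V3 → ℂ} {x : V3}
    (h : ∀ i ∈ s, DifferentiableAt ℝ (f i) x) (k : Fin 3) :
    pd k (fun y => ∑ i ∈ s, f i y) x = ∑ i ∈ s, pd k (f i) x := by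
  rw [pd, fderiv_fun_sum h]
  simp [pd]

lemma pd_conj {f : V3 → ℂ} {x : V3} (hf : DifferentiableAt ℝ f x) (k : Fin 3) :
    pd k (fun y => (starRingEnd ℂ) (f y)) x = (starRingEnd ℂ) (pd k f x) := by
  have : HasFDerivAt (fun y => (starRingEnd ℂ) (f y))
      ((Complex.conjCLE.toContinuousLinearMap).comp (fderiv ℝ f x)) x :=
    (Complex.conjCLE.toContinuousLinearMap.hasFDerivAt).comp x hf.hasFDerivAt
  rw [pd, this.fderiv]
  rfl


section Calc2

variable {U : Set V3}

lemma diffAt {h : V3 → ℂ} (hU : IsOpen U) (hh : ContDiffOn ℝ 1 h U) {x : V3} (hx : x ∈ U) :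
    DifferentiableAt ℝ h x :=
  (hh.contDiffAt (hU.mem_nhds hx)).differentiableAt one_ne_zero

lemma contDiffOn_pd {h : V3 → ℂ} (hU : IsOpen U) (hh : ContDiffOn ℝ 2 h U) (k : Fin 3) :
    ContDiffOn ℝ 1 (fun y => pd k h y) U := by
  have h1 : ContDiffOn ℝ 1 (fderiv ℝ h) U := hh.fderiv_of_isOpen hU (by norm_num)
  exact (h1.clm_apply contDiffOn_const).congr (fun y _ => rfl)

lemma pd_pd_eq {h : V3 → ℂ} (hU : IsOpen U) (hh : ContDiffOn ℝ 2 h U) {x : V3} (hx : x ∈ U)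
    (i k : Fin 3) :
    pd i (fun y => pd k h y) x
      = fderiv ℝ (fderiv ℝ h) x (Pi.single i 1 : V3) (Pi.single k 1 : V3) := by
  have hd : DifferentiableAt ℝ (fderiv ℝ h) x :=
    ((hh.fderiv_of_isOpen (m := 1) hU (by norm_num)).contDiffAt (hU.mem_nhds hx)).differentiableAt one_ne_zero
  have : pd i (fun y => pd k h y) x
      = fderiv ℝ (fun y => (fderiv ℝ h y) (Pi.single k 1 : V3)) x (Pi.single i 1 : V3) := rfl
  rw [this, fderiv_clm_apply hd (differentiableAt_const _)]
  simp

lemma pd_pd_symm {h : V3 → ℂ} (hU : IsOpen U) (hh : ContDiffOn ℝ 2 h U) {x : V3} (hx : x ∈ U)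
    (i k : Fin 3) :
    pd i (fun y => pd k h y) x = pd k (fun y => pd i h y) x := by
  rw [pd_pd_eq hU hh hx, pd_pd_eq hU hh hx]
  exact ((hh.contDiffAt (hU.mem_nhds hx)).isSymmSndFDerivAt (by norm_num)).eq _ _

end Calc2

/-- The flux field used for integration by parts. -/
def Fv (u w : V3 → C3) (x : V3) (i : Fin 3) : ℂ :=
  (∑ k, u x k * pd k (fun y => w y i) x) - u x i * ∑ k, pd k (fun y => w y k) x

section Div

variable {U : Set V3} {u w : V3 → C3} {x : V3}

lemma pd_Fv (hU : IsOpen U) (hu : ∀ j, ContDiffOn ℝ 2 (fun y => u y j) U)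
    (hw : ∀ j, ContDiffOn ℝ 2 (fun y => w y j) U) (hx : x ∈ U) (i : Fin 3) :
    pd i (fun y => Fv u w y i) x
      = (∑ k, (pd i (fun y => u y k) x * pd k (fun y => w y i) x
            + u x k * pd i (fun y => pd k (fun y' => w y' i) y) x))
        - (pd i (fun y => u y i) x * (∑ k, pd k (fun y => w y k) x)
            + u x i * ∑ k, pd i (fun y => pd k (fun y' => w y' k) y) x) := by
  have du : ∀ k, DifferentiableAt ℝ (fun y => u y k) x :=
    fun k => diffAt hU ((hu k).of_le (by norm_num)) hx
  have dw : ∀ j k, DifferentiableAt ℝ (fun y => pd k (fun y' => w y' j) y) x :=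
    fun j k => diffAt hU (contDiffOn_pd hU (hw j) k) hx
  have dprod : ∀ k, DifferentiableAt ℝ (fun y => u y k * pd k (fun y' => w y' i) y) x :=
    fun k => (du k).mul (dw i k)
  have dsum1 : DifferentiableAt ℝ (fun y => ∑ k, u y k * pd k (fun y' => w y' i) y) x :=
    DifferentiableAt.fun_sum (fun k _ => dprod k)
  have dsum2 : DifferentiableAt ℝ (fun y => ∑ k, pd k (fun y' => w y' k) y) x :=
    DifferentiableAt.fun_sum (fun k _ => dw k k)
  have e1 : pd i (fun y => Fv u w y i) x
      = pd i (fun y => ∑ k, u y k * pd k (fun y' => w y' i) y) x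
        - pd i (fun y => u y i * ∑ k, pd k (fun y' => w y' k) y) x := by
    exact pd_sub dsum1 ((du i).mul dsum2) i
  rw [e1, pd_sum _ (fun k _ => dprod k), pd_mul (du i) dsum2,
    pd_sum _ (fun k _ => dw k k)]
  exact congrArg₂ _ (Finset.sum_congr rfl fun k _ => pd_mul (du k) (dw i k) i) rfl

lemma div_Fv (hU : IsOpen U) (hu : ∀ j, ContDiffOn ℝ 2 (fun y => u y j) U)
    (hw : ∀ j, ContDiffOn ℝ 2 (fun y => w y j) U) (hx : x ∈ U) :
    ∑ i, pd i (fun y => Fv u w y i) x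
      = (∑ i, ∑ k, pd i (fun y => u y k) x * pd k (fun y => w y i) x)
        - (∑ i, pd i (fun y => u y i) x) * (∑ k, pd k (fun y => w y k) x) := by
  have hsym : ∀ i k j : Fin 3,
      pd i (fun y => pd k (fun y' => w y' j) y) x
        = pd k (fun y => pd i (fun y' => w y' j) y) x :=
    fun i k j => pd_pd_symm hU (hw j) hx i k
  have e : ∀ i, pd i (fun y => Fv u w y i) x = _ := fun i => pd_Fv hU hu hw hx i
  simp only [e]
  simp only [Fin.sum_univ_three]
  linear_combination (u x 0) * hsym 1 0 1 + (u x 0) * hsym 2 0 2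
    + (u x 1) * hsym 0 1 0 + (u x 1) * hsym 2 1 2
    + (u x 2) * hsym 0 2 0 + (u x 2) * hsym 1 2 1

end Div

section Geom

lemma Fv_face_zero {u w : V3 → C3} {x : V3} {j : Fin 3} {Fc : Set V3}
    (hw : ∀ i, DifferentiableAt ℝ (fun y => w y i) x)
    (hx : x ∈ Fc)
    (hline : ∀ k, k ≠ j → ∀ᶠ t : ℝ in nhds (0:ℝ), x + t • (Pi.single k 1 : V3) ∈ Fc)
    (hbc : (∀ y ∈ Fc, u y j = 0 ∧ w y j = 0) ∨
           (∀ y ∈ Fc, ∀ i, i ≠ j → u y i = 0 ∧ w y i = 0)) :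
    Fv u w x j = 0 := by
  rcases hbc with hA | hB
  · have h1 : ∀ k, k ≠ j → pd k (fun y => w y j) x = 0 := fun k hk =>
      pd_zero_of_line (hw j) k (((hline k hk).mono fun t ht => (hA _ ht).2))
    have h2 : u x j = 0 := (hA x hx).1
    have e : (∑ k, u x k * pd k (fun y => w y j) x) = u x j * pd j (fun y => w y j) x :=
      Finset.sum_eq_single j (fun k _ hk => by rw [h1 k hk, mul_zero]) (by simp)
    simp [Fv, e, h2]
  · have h1 : ∀ k, k ≠ j → u x k = 0 := fun k hk => (hB x hx k hk).1
    have h2 : ∀ k, k ≠ j → pd k (fun y => w y k) x = 0 := fun k hk =>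
      pd_zero_of_line (hw k) k (((hline k hk).mono fun t ht => (hB _ ht k hk).2))
    have e1 : (∑ k, u x k * pd k (fun y => w y j) x) = u x j * pd j (fun y => w y j) x :=
      Finset.sum_eq_single j (fun k _ hk => by rw [h1 k hk, zero_mul]) (by simp)
    have e2 : (∑ k, pd k (fun y => w y k) x) = pd j (fun y => w y j) x :=
      Finset.sum_eq_single j (fun k _ hk => h2 k hk) (by simp)
    simp [Fv, e1, e2]

lemma isOpen_rect {l1 l2 : ℝ} : IsOpen (Rect l1 l2) := by
  have : Rect l1 l2 = (fun x : V3 => x 0) ⁻¹' (Set.Ioo 0 l1)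
      ∩ (fun x : V3 => x 1) ⁻¹' (Set.Ioo 0 l2) := by
    ext x; simp [Rect, Set.mem_Ioo]; tauto
  rw [this]
  exact ((isOpen_Ioo).preimage (continuous_apply 0)).inter
    ((isOpen_Ioo).preimage (continuous_apply 1))

lemma mem_closure_rect {l1 l2 : ℝ} (hl1 : 0 < l1) (hl2 : 0 < l2) {x : V3}
    (h0 : x 0 ∈ Set.Icc (0:ℝ) l1) (h1 : x 1 ∈ Set.Icc (0:ℝ) l2) :
    x ∈ closure (Rect l1 l2) := by
  set c : V3 := ![l1/2, l2/2, x 2] with hc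
  have hcomp : ∀ (t : ℝ) (m : Fin 3), (x + t • (c - x)) m = x m + t * (c m - x m) := by
    intro t m; simp [smul_eq_mul]
  have hmem : ∀ t : ℝ, t ∈ Set.Ioc (0:ℝ) 1 → x + t • (c - x) ∈ Rect l1 l2 := by
    intro t ht
    obtain ⟨ht0, ht1⟩ := ht
    obtain ⟨ha0, ha1⟩ := h0
    obtain ⟨hb0, hb1⟩ := h1
    refine ⟨?_, ?_, ?_, ?_⟩
    · rw [hcomp]; show 0 < x 0 + t * (l1/2 - x 0); nlinarith
    · rw [hcomp]; show x 0 + t * (l1/2 - x 0) < l1; nlinarith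
    · rw [hcomp]; show 0 < x 1 + t * (l2/2 - x 1); nlinarith
    · rw [hcomp]; show x 1 + t * (l2/2 - x 1) < l2; nlinarith
  have htend : Filter.Tendsto (fun n : ℕ => x + ((1:ℝ)/(n+1)) • (c - x))
      Filter.atTop (nhds x) := by
    have h0' : Filter.Tendsto (fun n : ℕ => (1:ℝ)/(n+1)) Filter.atTop (nhds 0) :=
      tendsto_one_div_add_atTop_nhds_zero_nat
    have := (h0'.smul_const (c - x)).const_add x
    simpa using this
  refine mem_closure_of_tendsto htend (Filter.Eventually.of_forall fun n => ?_)
  refine hmem _ ⟨by positivity, ?_⟩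
  rw [div_le_one (by positivity)]
  linarith [Nat.cast_nonneg (α := ℝ) n]

lemma ins0 (c : ℝ) (y : Fin 2 → ℝ) : (Fin.insertNth (0 : Fin 3) c y : V3) = ![c, y 0, y 1] := by
  funext m; fin_cases m <;> rfl

lemma ins1 (c : ℝ) (y : Fin 2 → ℝ) : (Fin.insertNth (1 : Fin 3) c y : V3) = ![y 0, c, y 1] := by
  funext m; fin_cases m <;> rfl

lemma ins2 (c : ℝ) (y : Fin 2 → ℝ) : (Fin.insertNth (2 : Fin 3) c y : V3) = ![y 0, y 1, c] := by
  funext m; fin_cases m <;> rfl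

end Geom

section Master

variable {U : Set V3} {a b : V3 → C3} {x : V3}

lemma conj_contDiffOn {f : V3 → ℂ} (hf : ContDiffOn ℝ 2 f U) :
    ContDiffOn ℝ 2 (fun y => (starRingEnd ℂ) (f y)) U :=
  (Complex.conjCLE.toContinuousLinearMap.contDiff.comp_contDiffOn hf)

lemma master_identity (hU : IsOpen U)
    (ha2 : ∀ j, ContDiffOn ℝ 2 (fun y => a y j) U)
    (hb2 : ∀ j, ContDiffOn ℝ 2 (fun y => b y j) U) (hx : x ∈ U) :
    (∑ j, hinner (pdV j a x) (pdV j b x)) - vdiv a x * (starRingEnd ℂ) (vdiv b x)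
      - hinner (vcurl a x) (vcurl b x)
      = ∑ i, pd i (fun y => Fv a (fun y i => (starRingEnd ℂ) (b y i)) y i) x := by
  have hw2 : ∀ j, ContDiffOn ℝ 2 (fun y => (starRingEnd ℂ) (b y j)) U :=
    fun j => conj_contDiffOn (hb2 j)
  rw [div_Fv hU ha2 hw2 hx]
  have hpdw : ∀ (j k : Fin 3), pd k (fun y => (starRingEnd ℂ) (b y j)) x
      = (starRingEnd ℂ) (pd k (fun y => b y j) x) :=
    fun j k => pd_conj (diffAt hU ((hb2 j).of_le (by norm_num)) hx) k
  simp only [hpdw, hinner, pdV, vdiv, vcurl, Fin.sum_univ_three,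
    Matrix.cons_val_zero, Matrix.cons_val_one, Matrix.head_cons, map_sub, map_add,
    Matrix.cons_val_two, Matrix.tail_cons]
  ring

end Master

lemma add_single_apply (x : V3) (t : ℝ) (k m : Fin 3) :
    (x + t • (Pi.single k 1 : V3)) m = x m + t * (if k = m then 1 else 0) := by
  by_cases h : k = m
  · subst h; simp
  · simp [Pi.single_eq_of_ne' h, h]

lemma null_hyper2 (i : Fin 2) (c : ℝ) : (volume : Measure (Fin 2 → ℝ)) {y | y i = c} = 0 := by
  rw [volume_pi]
  exact MeasureTheory.Measure.pi_hyperplane (fun _ : Fin 2 => (volume : Measure ℝ)) i c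

lemma ae_ne2 (i : Fin 2) (c : ℝ) : ∀ᵐ y : Fin 2 → ℝ, y i ≠ c := by
  have h := null_hyper2 i c
  exact MeasureTheory.measure_eq_zero_iff_ae_notMem.1 h

lemma BCface_to {a b : V3 → C3} {Fc : Set V3} {j : Fin 3} {n : V3}
    (hnj : n j = 1 ∨ n j = -1) (hn0 : ∀ i, i ≠ j → n i = 0)
    (h : BCface a b Fc n) :
    (∀ y ∈ Fc, a y j = 0 ∧ (starRingEnd ℂ) (b y j) = 0) ∨
    (∀ y ∈ Fc, ∀ i, i ≠ j → a y i = 0 ∧ (starRingEnd ℂ) (b y i) = 0) := by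
  have hnc : ∀ z : C3, ncompV n z = z j * (n j : ℂ) := by
    intro z
    rw [ncompV, Finset.sum_eq_single j (fun i _ hi => by rw [hn0 i hi]; simp) (by simp)]
  have hnj' : (n j : ℂ) ≠ 0 := by
    rcases hnj with h' | h' <;> rw [h'] <;> norm_num
  rcases h with h | h
  · left; intro y hy
    obtain ⟨h1, h2⟩ := h y hy
    rw [hnc] at h1 h2
    refine ⟨(mul_eq_zero.1 h1).resolve_right hnj', ?_⟩
    rw [(mul_eq_zero.1 h2).resolve_right hnj']
    simp
  · right; intro y hy i hi
    obtain ⟨h1, h2⟩ := h y hy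
    constructor
    · rw [h1 i, hn0 i hi]; simp
    · rw [h2 i, hn0 i hi]; simp

section Cont

variable {U : Set V3}

lemma contOn_conj {g : V3 → ℂ} (hg : ContinuousOn g U) :
    ContinuousOn (fun x => (starRingEnd ℂ) (g x)) U := by
  simp only [starRingEnd_apply]
  exact continuous_star.comp_continuousOn hg

lemma contOn_hinner {u v : V3 → C3} (hu : ∀ i, ContinuousOn (fun x => u x i) U)
    (hv : ∀ i, ContinuousOn (fun x => v x i) U) :
    ContinuousOn (fun x => hinner (u x) (v x)) U := by
  have e : (fun x => hinner (u x) (v x))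
      = fun x => ∑ i, (u x i) * (starRingEnd ℂ) (v x i) := rfl
  rw [e]
  exact continuousOn_finset_sum _ fun i _ => (hu i).mul (contOn_conj (hv i))

lemma contOn_pda (hU : IsOpen U) {a : V3 → C3}
    (ha2 : ∀ j, ContDiffOn ℝ 2 (fun y => a y j) U) (i j : Fin 3) :
    ContinuousOn (fun x => pd j (fun y => a y i) x) U :=
  (contDiffOn_pd hU (ha2 i) j).continuousOn

lemma contOn_curl (hU : IsOpen U) {a : V3 → C3}
    (ha2 : ∀ j, ContDiffOn ℝ 2 (fun y => a y j) U) (i : Fin 3) :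
    ContinuousOn (fun x => vcurl a x i) U := by
  fin_cases i
  · exact ((contOn_pda hU ha2 2 1).sub (contOn_pda hU ha2 1 2)).congr fun x _ => by
      simp [vcurl]
  · exact ((contOn_pda hU ha2 0 2).sub (contOn_pda hU ha2 2 0)).congr fun x _ => by
      simp [vcurl]
  · exact ((contOn_pda hU ha2 1 0).sub (contOn_pda hU ha2 0 1)).congr fun x _ => by
      simp [vcurl]

lemma contOn_div (hU : IsOpen U) {a : V3 → C3}
    (ha2 : ∀ j, ContDiffOn ℝ 2 (fun y => a y j) U) :
    ContinuousOn (fun x => vdiv a x) U := by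
  have e : (fun x => vdiv a x) = fun x => ∑ j, pd j (fun y => a y j) x := rfl
  rw [e]
  exact continuousOn_finset_sum _ fun j _ => contOn_pda hU ha2 j j

end Cont

section Faces

lemma int_zero_of_ae {s : Set (Fin 2 → ℝ)} (hs : MeasurableSet s) {φ : (Fin 2 → ℝ) → ℂ}
    (h : ∀ᵐ y : Fin 2 → ℝ, y ∈ s → φ y = 0) : ∫ y in s, φ y = 0 := by
  have := setIntegral_congr_ae (μ := volume) (g := fun _ => (0:ℂ)) hs h
  simpa using this

lemma face2_zero {a w : V3 → C3} {T c : ℝ} (hTa : ∀ x : V3, T ≤ |x 2| → a x = 0)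
    (hc : T ≤ |c|) (y : Fin 2 → ℝ) (i : Fin 3) : Fv a w (Fin.insertNth 2 c y) i = 0 := by
  have hx : a (Fin.insertNth 2 c y) = 0 := by
    apply hTa
    rw [ins2]
    simpa using hc
  simp [Fv, hx]

lemma face0_ae {U : Set V3} (hU : IsOpen U) {l1 l2 : ℝ} (hl1 : 0 < l1) (hl2 : 0 < l2)
    {a b : V3 → C3} (hb2 : ∀ j, ContDiffOn ℝ 2 (fun y => b y j) U)
    (hcl : closure (Rect l1 l2) ⊆ U) {c : ℝ} (hc : c ∈ Set.Icc (0:ℝ) l1)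
    {n : V3} (hnj : n 0 = 1 ∨ n 0 = -1) (hn0 : ∀ i, i ≠ 0 → n i = 0)
    (hbc : BCface a b {x : V3 | x 0 = c ∧ 0 < x 1 ∧ x 1 < l2} n)
    {lo hi : Fin 2 → ℝ} (hlo : lo 0 = 0) (hhi : hi 0 = l2) :
    ∀ᵐ y : Fin 2 → ℝ, y ∈ Set.Icc lo hi →
      Fv a (fun y' i => (starRingEnd ℂ) (b y' i)) (Fin.insertNth 0 c y) 0 = 0 := by
  filter_upwards [ae_ne2 0 0, ae_ne2 0 l2] with y h0 hl hy
  set Fc : Set V3 := {x : V3 | x 0 = c ∧ 0 < x 1 ∧ x 1 < l2} with hFc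
  set x : V3 := Fin.insertNth 0 c y with hxdef
  have hx : x = ![c, y 0, y 1] := ins0 c y
  have hx0 : x 0 = c := by rw [hx]; rfl
  have hx1 : x 1 = y 0 := by rw [hx]; rfl
  have hy0 : (0:ℝ) ≤ y 0 := by have := hy.1 0; rwa [hlo] at this
  have hy1 : y 0 ≤ l2 := by have := hy.2 0; rwa [hhi] at this
  have hy0' : 0 < y 0 := lt_of_le_of_ne hy0 (Ne.symm h0)
  have hy1' : y 0 < l2 := lt_of_le_of_ne hy1 hl
  have hxU : x ∈ U := hcl (mem_closure_rect hl1 hl2 (by rw [hx0]; exact hc)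
    (by rw [hx1]; exact ⟨hy0, hy1⟩))
  have hwd : ∀ i, DifferentiableAt ℝ (fun y' => (starRingEnd ℂ) (b y' i)) x :=
    fun i => diffAt hU ((conj_contDiffOn (hb2 i)).of_le (by norm_num)) hxU
  have hxF : x ∈ Fc := ⟨hx0, by rw [hx1]; exact hy0', by rw [hx1]; exact hy1'⟩
  have hline : ∀ k, k ≠ (0 : Fin 3) → ∀ᶠ t : ℝ in nhds (0:ℝ),
      x + t • (Pi.single k 1 : V3) ∈ Fc := by
    intro k hk
    have hmemIoo : ∀ᶠ t : ℝ in nhds (0:ℝ), t ∈ Set.Ioo (-(x 1)) (l2 - x 1) := by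
      apply Ioo_mem_nhds
      · rw [hx1]; linarith
      · rw [hx1]; linarith
    filter_upwards [hmemIoo] with t ht
    refine ⟨?_, ?_, ?_⟩
    · rw [add_single_apply, if_neg hk, mul_zero, add_zero]; exact hx0
    · rw [add_single_apply]
      by_cases hk1 : k = 1
      · rw [if_pos hk1, mul_one]; linarith [ht.1]
      · rw [if_neg hk1, mul_zero, add_zero]; rw [hx1]; exact hy0'
    · rw [add_single_apply]
      by_cases hk1 : k = 1
      · rw [if_pos hk1, mul_one]; linarith [ht.2]
      · rw [if_neg hk1, mul_zero, add_zero]; rw [hx1]; exact hy1'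
  have hbc' := BCface_to hnj hn0 hbc
  exact Fv_face_zero hwd hxF hline
    (hbc'.imp (fun h y' hy' => h y' hy') (fun h y' hy' i hi => h y' hy' i hi))

end Faces

lemma face1_ae {U : Set V3} (hU : IsOpen U) {l1 l2 : ℝ} (hl1 : 0 < l1) (hl2 : 0 < l2)
    {a b : V3 → C3} (hb2 : ∀ j, ContDiffOn ℝ 2 (fun y => b y j) U)
    (hcl : closure (Rect l1 l2) ⊆ U) {c : ℝ} (hc : c ∈ Set.Icc (0:ℝ) l2)
    {n : V3} (hnj : n 1 = 1 ∨ n 1 = -1) (hn0 : ∀ i, i ≠ 1 → n i = 0)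
    (hbc : BCface a b {x : V3 | x 1 = c ∧ 0 < x 0 ∧ x 0 < l1} n)
    {lo hi : Fin 2 → ℝ} (hlo : lo 0 = 0) (hhi : hi 0 = l1) :
    ∀ᵐ y : Fin 2 → ℝ, y ∈ Set.Icc lo hi →
      Fv a (fun y' i => (starRingEnd ℂ) (b y' i)) (Fin.insertNth 1 c y) 1 = 0 := by
  filter_upwards [ae_ne2 0 0, ae_ne2 0 l1] with y h0 hl hy
  set Fc : Set V3 := {x : V3 | x 1 = c ∧ 0 < x 0 ∧ x 0 < l1} with hFc
  set x : V3 := Fin.insertNth 1 c y with hxdef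
  have hx : x = ![y 0, c, y 1] := ins1 c y
  have hx0 : x 0 = y 0 := by rw [hx]; rfl
  have hx1 : x 1 = c := by rw [hx]; rfl
  have hy0 : (0:ℝ) ≤ y 0 := by have := hy.1 0; rwa [hlo] at this
  have hy1 : y 0 ≤ l1 := by have := hy.2 0; rwa [hhi] at this
  have hy0' : 0 < y 0 := lt_of_le_of_ne hy0 (Ne.symm h0)
  have hy1' : y 0 < l1 := lt_of_le_of_ne hy1 hl
  have hxU : x ∈ U := hcl (mem_closure_rect hl1 hl2 (by rw [hx0]; exact ⟨hy0, hy1⟩)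
    (by rw [hx1]; exact hc))
  have hwd : ∀ i, DifferentiableAt ℝ (fun y' => (starRingEnd ℂ) (b y' i)) x :=
    fun i => diffAt hU ((conj_contDiffOn (hb2 i)).of_le (by norm_num)) hxU
  have hxF : x ∈ Fc := ⟨hx1, by rw [hx0]; exact hy0', by rw [hx0]; exact hy1'⟩
  have hline : ∀ k, k ≠ (1 : Fin 3) → ∀ᶠ t : ℝ in nhds (0:ℝ),
      x + t • (Pi.single k 1 : V3) ∈ Fc := by
    intro k hk
    have hmemIoo : ∀ᶠ t : ℝ in nhds (0:ℝ), t ∈ Set.Ioo (-(x 0)) (l1 - x 0) := by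
      apply Ioo_mem_nhds
      · rw [hx0]; linarith
      · rw [hx0]; linarith
    filter_upwards [hmemIoo] with t ht
    refine ⟨?_, ?_, ?_⟩
    · rw [add_single_apply, if_neg hk, mul_zero, add_zero]; exact hx1
    · rw [add_single_apply]
      by_cases hk0 : k = 0
      · rw [if_pos hk0, mul_one]; linarith [ht.1]
      · rw [if_neg hk0, mul_zero, add_zero]; rw [hx0]; exact hy0'
    · rw [add_single_apply]
      by_cases hk0 : k = 0
      · rw [if_pos hk0, mul_one]; linarith [ht.2]
      · rw [if_neg hk0, mul_zero, add_zero]; rw [hx0]; exact hy1'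
  have hbc' := BCface_to hnj hn0 hbc
  exact Fv_face_zero hwd hxF hline
    (hbc'.imp (fun h y' hy' => h y' hy') (fun h y' hy' i hi => h y' hy' i hi))

/-- in a cylinder with rectangular cross-section, the Green-type identity for
curl holds without a boundary term. -/
theorem statement8 (l1 l2 : ℝ) (hl1 : 0 < l1) (hl2 : 0 < l2) (a b : V3 → C3)
    (ha : UpTo 2 (Rect l1 l2) a) (hb : UpTo 2 (Rect l1 l2) b) (has : AxialSupp a)
    (hF1 : BCface a b {x : V3 | x 0 = 0 ∧ 0 < x 1 ∧ x 1 < l2} ![-1, 0, 0])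
    (hF2 : BCface a b {x : V3 | x 0 = l1 ∧ 0 < x 1 ∧ x 1 < l2} ![1, 0, 0])
    (hF3 : BCface a b {x : V3 | x 1 = 0 ∧ 0 < x 0 ∧ x 0 < l1} ![0, -1, 0])
    (hF4 : BCface a b {x : V3 | x 1 = l2 ∧ 0 < x 0 ∧ x 0 < l1} ![0, 1, 0]) :
    ∫ x in Rect l1 l2, hinner (vcurl a x) (vcurl b x)
      = (∫ x in Rect l1 l2, ∑ j, hinner (pdV j a x) (pdV j b x))
        - ∫ x in Rect l1 l2, vdiv a x * (starRingEnd ℂ) (vdiv b x) := by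
  classical
  obtain ⟨Ua, hUa, hclA, haC⟩ := ha
  obtain ⟨Ub, hUb, hclB, hbC⟩ := hb
  obtain ⟨T, hT0, hTa⟩ := has
  set U : Set V3 := Ua ∩ Ub with hUdef
  have hU : IsOpen U := hUa.inter hUb
  have hcl : closure (Rect l1 l2) ⊆ U := Set.subset_inter hclA hclB
  have haC2 : ∀ j, ContDiffOn ℝ 2 (fun y => a y j) U :=
    contDiffOn_pi.1 (haC.mono Set.inter_subset_left)
  have hbC2 : ∀ j, ContDiffOn ℝ 2 (fun y => b y j) U :=
    contDiffOn_pi.1 (hbC.mono Set.inter_subset_right)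
  have hw2 : ∀ j, ContDiffOn ℝ 2 (fun y => (starRingEnd ℂ) (b y j)) U :=
    fun j => conj_contDiffOn (hbC2 j)
  set AA : V3 := ![0, 0, -(T+1)] with hAA
  set BB : V3 := ![l1, l2, T+1] with hBB
  have hAA0 : AA 0 = 0 := rfl
  have hAA1 : AA 1 = 0 := rfl
  have hAA2 : AA 2 = -(T+1) := rfl
  have hBB0 : BB 0 = l1 := rfl
  have hBB1 : BB 1 = l2 := rfl
  have hBB2 : BB 2 = T+1 := rfl
  set S : Set V3 := Set.pi Set.univ (fun i => Set.Ioo (AA i) (BB i)) with hSdef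
  have hmemS : ∀ x : V3, x ∈ S ↔
      ((0 < x 0 ∧ x 0 < l1) ∧ (0 < x 1 ∧ x 1 < l2) ∧ (-(T+1) < x 2 ∧ x 2 < T+1)) := by
    intro x
    constructor
    · intro h
      exact ⟨⟨(h 0 trivial).1, (h 0 trivial).2⟩, ⟨(h 1 trivial).1, (h 1 trivial).2⟩,
        ⟨(h 2 trivial).1, (h 2 trivial).2⟩⟩
    · rintro ⟨h0, h1, h2⟩ i _
      fin_cases i
      · exact ⟨h0.1, h0.2⟩
      · exact ⟨h1.1, h1.2⟩
      · exact ⟨h2.1, h2.2⟩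
  have hSR : S ⊆ Rect l1 l2 := by
    intro x hx
    rw [hmemS] at hx
    exact ⟨hx.1.1, hx.1.2, hx.2.1.1, hx.2.1.2⟩
  have hRectU : Rect l1 l2 ⊆ U := subset_closure.trans hcl
  have hIccU : Set.Icc AA BB ⊆ U := by
    intro x hx
    exact hcl (mem_closure_rect hl1 hl2 ⟨hx.1 0, hx.2 0⟩ ⟨hx.1 1, hx.2 1⟩)
  have hSIcc : S ⊆ Set.Icc AA BB := by
    intro x hx
    exact ⟨fun i => ((hx i trivial).1).le, fun i => ((hx i trivial).2).le⟩
  have hRmeas : MeasurableSet (Rect l1 l2) := isOpen_rect.measurableSet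
  have hfar' : ∀ x ∈ Rect l1 l2 \ S, T < |x 2| := by
    rintro x ⟨hxR, hxS⟩
    by_contra hcon
    push_neg at hcon
    have habs := abs_le.1 hcon
    exact hxS ((hmemS x).2 ⟨⟨hxR.1, hxR.2.1⟩, ⟨hxR.2.2.1, hxR.2.2.2⟩,
      ⟨by linarith [habs.1], by linarith [habs.2]⟩⟩)
  -- vanishing of derivatives of a far away
  have hfarpd : ∀ x : V3, T < |x 2| → (∀ i j, pd j (fun y => a y i) x = 0) ∧ ∀ i, a x i = 0 := by
    intro x hx
    have hopen : IsOpen {y : V3 | T < |y 2|} :=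
      isOpen_lt continuous_const ((continuous_apply (2 : Fin 3)).abs)
    have hev : ∀ᶠ y in nhds x, a y = 0 := by
      filter_upwards [hopen.mem_nhds hx] with y hy
      exact hTa y (le_of_lt hy)
    constructor
    · intro i j
      exact pd_congr_zero (hev.mono fun y hy => by rw [hy]; rfl) j
    · intro i
      rw [hTa x (le_of_lt hx)]
      rfl
  have hvan1 : ∀ x : V3, T < |x 2| → hinner (vcurl a x) (vcurl b x) = 0 := by
    intro x hx
    have hp := (hfarpd x hx).1
    simp [hinner, vcurl, Fin.sum_univ_three, hp]
  have hvan2 : ∀ x : V3, T < |x 2| → (∑ j, hinner (pdV j a x) (pdV j b x)) = 0 := by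
    intro x hx
    have hp := (hfarpd x hx).1
    simp [hinner, pdV, Fin.sum_univ_three, hp]
  have hvan3 : ∀ x : V3, T < |x 2| → vdiv a x * (starRingEnd ℂ) (vdiv b x) = 0 := by
    intro x hx
    have hp := (hfarpd x hx).1
    simp [vdiv, Fin.sum_univ_three, hp]
  have hSmeas : MeasurableSet S := MeasurableSet.univ_pi fun i => measurableSet_Ioo
  have hSae : S =ᵐ[(volume : Measure V3)] Set.Icc AA BB := by
    rw [hSdef, MeasureTheory.volume_pi]
    exact MeasureTheory.Measure.univ_pi_Ioo_ae_eq_Icc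
  -- generic reduction from Rect to the box
  have hchain : ∀ g : V3 → ℂ, (∀ x : V3, T < |x 2| → g x = 0) →
      ∫ x in Rect l1 l2, g x = ∫ x in Set.Icc AA BB, g x := by
    intro g hg
    have e1 : ∫ x in Rect l1 l2, g x = ∫ x in S, g x :=
      setIntegral_eq_of_subset_of_forall_diff_eq_zero hRmeas hSR
        (fun x hx => hg x (hfar' x hx))
    rw [e1, setIntegral_congr_set hSae]
  -- generic integrability on Rect
  have hIntOn : ∀ g : V3 → ℂ, ContinuousOn g U → (∀ x : V3, T < |x 2| → g x = 0) →
      IntegrableOn g (Rect l1 l2) := by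
    intro g hc hv
    have h1 : IntegrableOn g S volume :=
      (((hc.mono hIccU).integrableOn_compact isCompact_Icc).mono_set hSIcc)
    have h2 : IntegrableOn g (Rect l1 l2 \ S) volume := by
      have hz : IntegrableOn (fun _ : V3 => (0:ℂ)) (Rect l1 l2 \ S) volume := integrableOn_zero
      exact hz.congr_fun (fun x hx => (hv x (hfar' x hx)).symm) (hRmeas.diff hSmeas)
    exact (h1.union h2).mono_set fun x hx => by
      by_cases h : x ∈ S
      · exact Or.inl h
      · exact Or.inr ⟨hx, h⟩
  -- continuity of the three integrands on U
  have hg1c : ContinuousOn (fun x => hinner (vcurl a x) (vcurl b x)) U :=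
    contOn_hinner (contOn_curl hU haC2) (contOn_curl hU hbC2)
  have hg2c : ContinuousOn (fun x => ∑ j, hinner (pdV j a x) (pdV j b x)) U := by
    apply continuousOn_finset_sum
    intro j _
    exact contOn_hinner (fun i => contOn_pda hU haC2 i j) (fun i => contOn_pda hU hbC2 i j)
  have hg3c : ContinuousOn (fun x => vdiv a x * (starRingEnd ℂ) (vdiv b x)) U :=
    (contOn_div hU haC2).mul (contOn_conj (contOn_div hU hbC2))
  -- smoothness of the flux field
  have hFfC1 : ∀ i, ContDiffOn ℝ 1
      (fun y => Fv a (fun y' i' => (starRingEnd ℂ) (b y' i')) y i) U := by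
    intro i
    have h1 : ∀ k, ContDiffOn ℝ 1 (fun y => a y k) U := fun k => (haC2 k).of_le (by norm_num)
    have h2 : ∀ j k, ContDiffOn ℝ 1
        (fun y => pd k (fun y' => (starRingEnd ℂ) (b y' j)) y) U :=
      fun j k => contDiffOn_pd hU (hw2 j) k
    have : ContDiffOn ℝ 1 (fun y =>
        (∑ k, a y k * pd k (fun y' => (starRingEnd ℂ) (b y' i)) y)
          - a y i * ∑ k, pd k (fun y' => (starRingEnd ℂ) (b y' k)) y) U :=
      (ContDiffOn.sum fun k _ => (h1 k).mul (h2 i k)).sub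
        ((h1 i).mul (ContDiffOn.sum fun k _ => h2 k k))
    exact this.congr fun y _ => rfl
  -- divergence theorem
  have hle : AA ≤ BB := by
    intro i
    fin_cases i
    · show (0:ℝ) ≤ l1; linarith
    · show (0:ℝ) ≤ l2; linarith
    · show -(T+1) ≤ T+1; linarith
  have Hc : ∀ i, ContinuousOn
      (fun y => Fv a (fun y' i' => (starRingEnd ℂ) (b y' i')) y i) (Set.Icc AA BB) :=
    fun i => ((hFfC1 i).continuousOn).mono hIccU
  have Hd : ∀ x ∈ S \ (∅ : Set V3), ∀ i, HasFDerivAt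
      (fun y => Fv a (fun y' i' => (starRingEnd ℂ) (b y' i')) y i)
      (fderiv ℝ (fun y => Fv a (fun y' i' => (starRingEnd ℂ) (b y' i')) y i) x) x := by
    intro x hx i
    exact (diffAt hU (hFfC1 i) (hRectU (hSR hx.1))).hasFDerivAt
  have Hi : IntegrableOn (fun x => ∑ i, fderiv ℝ
      (fun y => Fv a (fun y' i' => (starRingEnd ℂ) (b y' i')) y i) x (Pi.single i 1))
      (Set.Icc AA BB) volume := by
    have hcont : ContinuousOn (fun x => ∑ i, fderiv ℝ
        (fun y => Fv a (fun y' i' => (starRingEnd ℂ) (b y' i')) y i) x (Pi.single i 1)) U := by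
      apply continuousOn_finset_sum
      intro i _
      exact (ContinuousLinearMap.apply ℝ ℂ ((Pi.single i 1 : V3))).continuous.comp_continuousOn
        ((hFfC1 i).continuousOn_fderiv_of_isOpen hU (by norm_num))
    exact (hcont.mono hIccU).integrableOn_compact isCompact_Icc
  have hDiv := MeasureTheory.integral_divergence_of_hasFDerivAt_off_countable'
    AA BB hle (fun i y => Fv a (fun y' i' => (starRingEnd ℂ) (b y' i')) y i)
    (fun i x => fderiv ℝ (fun y => Fv a (fun y' i' => (starRingEnd ℂ) (b y' i')) y i) x)
    ∅ Set.countable_empty Hc (by rw [← hSdef]; exact Hd) Hi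
  -- face integrals vanish
  have hsucc00 : ((AA ∘ Fin.succAbove 0) 0 : ℝ) = 0 := rfl
  have hsucc01 : ((BB ∘ Fin.succAbove 0) 0 : ℝ) = l2 := rfl
  have hsucc10 : ((AA ∘ Fin.succAbove 1) 0 : ℝ) = 0 := rfl
  have hsucc11 : ((BB ∘ Fin.succAbove 1) 0 : ℝ) = l1 := rfl
  have hn2 : ∀ i : Fin 3, i ≠ 0 → (![1, 0, 0] : V3) i = 0 := by
    intro i hi
    fin_cases i
    · exact absurd rfl hi
    · rfl
    · rfl
  have hn1 : ∀ i : Fin 3, i ≠ 0 → (![-1, 0, 0] : V3) i = 0 := by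
    intro i hi
    fin_cases i
    · exact absurd rfl hi
    · rfl
    · rfl
  have hn4 : ∀ i : Fin 3, i ≠ 1 → (![0, 1, 0] : V3) i = 0 := by
    intro i hi
    fin_cases i
    · rfl
    · exact absurd rfl hi
    · rfl
  have hn3 : ∀ i : Fin 3, i ≠ 1 → (![0, -1, 0] : V3) i = 0 := by
    intro i hi
    fin_cases i
    · rfl
    · exact absurd rfl hi
    · rfl
  have hfront0 : ∫ y in Set.Icc (AA ∘ Fin.succAbove 0) (BB ∘ Fin.succAbove 0),
      Fv a (fun y' i' => (starRingEnd ℂ) (b y' i')) (Fin.insertNth 0 l1 y) 0 = 0 :=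
    int_zero_of_ae measurableSet_Icc
      (face0_ae hU hl1 hl2 hbC2 hcl ⟨hl1.le, le_refl l1⟩ (Or.inl rfl) hn2 hF2 hsucc00 hsucc01)
  have hback0 : ∫ y in Set.Icc (AA ∘ Fin.succAbove 0) (BB ∘ Fin.succAbove 0),
      Fv a (fun y' i' => (starRingEnd ℂ) (b y' i')) (Fin.insertNth 0 (0:ℝ) y) 0 = 0 :=
    int_zero_of_ae measurableSet_Icc
      (face0_ae hU hl1 hl2 hbC2 hcl ⟨le_refl (0:ℝ), hl1.le⟩ (Or.inr rfl) hn1 hF1 hsucc00 hsucc01)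
  have hfront1 : ∫ y in Set.Icc (AA ∘ Fin.succAbove 1) (BB ∘ Fin.succAbove 1),
      Fv a (fun y' i' => (starRingEnd ℂ) (b y' i')) (Fin.insertNth 1 l2 y) 1 = 0 :=
    int_zero_of_ae measurableSet_Icc
      (face1_ae hU hl1 hl2 hbC2 hcl ⟨hl2.le, le_refl l2⟩ (Or.inl rfl) hn4 hF4 hsucc10 hsucc11)
  have hback1 : ∫ y in Set.Icc (AA ∘ Fin.succAbove 1) (BB ∘ Fin.succAbove 1),
      Fv a (fun y' i' => (starRingEnd ℂ) (b y' i')) (Fin.insertNth 1 (0:ℝ) y) 1 = 0 :=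
    int_zero_of_ae measurableSet_Icc
      (face1_ae hU hl1 hl2 hbC2 hcl ⟨le_refl (0:ℝ), hl2.le⟩ (Or.inr rfl) hn3 hF3 hsucc10 hsucc11)
  have hfront2 : ∫ y in Set.Icc (AA ∘ Fin.succAbove 2) (BB ∘ Fin.succAbove 2),
      Fv a (fun y' i' => (starRingEnd ℂ) (b y' i')) (Fin.insertNth 2 (T+1) y) 2 = 0 :=
    int_zero_of_ae measurableSet_Icc (Filter.Eventually.of_forall fun y _ =>
      face2_zero hTa (by rw [abs_of_pos (by linarith)]; linarith) y 2)
  have hback2 : ∫ y in Set.Icc (AA ∘ Fin.succAbove 2) (BB ∘ Fin.succAbove 2),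
      Fv a (fun y' i' => (starRingEnd ℂ) (b y' i')) (Fin.insertNth 2 (-(T+1)) y) 2 = 0 :=
    int_zero_of_ae measurableSet_Icc (Filter.Eventually.of_forall fun y _ =>
      face2_zero hTa (by rw [abs_of_neg (by linarith)]; linarith) y 2)
  -- the key identity
  have hkey : ∫ x in Rect l1 l2, ((∑ j, hinner (pdV j a x) (pdV j b x))
      - vdiv a x * (starRingEnd ℂ) (vdiv b x) - hinner (vcurl a x) (vcurl b x)) = 0 := by
    have hvG : ∀ x : V3, T < |x 2| → ((∑ j, hinner (pdV j a x) (pdV j b x))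
        - vdiv a x * (starRingEnd ℂ) (vdiv b x) - hinner (vcurl a x) (vcurl b x)) = 0 := by
      intro x hx
      rw [hvan1 x hx, hvan2 x hx, hvan3 x hx]
      ring
    rw [hchain _ hvG]
    have e3 : ∫ x in Set.Icc AA BB, ((∑ j, hinner (pdV j a x) (pdV j b x))
        - vdiv a x * (starRingEnd ℂ) (vdiv b x) - hinner (vcurl a x) (vcurl b x))
        = ∫ x in Set.Icc AA BB, ∑ i, fderiv ℝ
            (fun y => Fv a (fun y' i' => (starRingEnd ℂ) (b y' i')) y i) x (Pi.single i 1) := by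
      refine setIntegral_congr_fun measurableSet_Icc fun x hx => ?_
      rw [master_identity hU haC2 hbC2 (hIccU hx)]
      rfl
    rw [e3]
    refine hDiv.trans ?_
    refine Finset.sum_eq_zero fun i _ => ?_
    fin_cases i
    · show (∫ y in Set.Icc (AA ∘ Fin.succAbove 0) (BB ∘ Fin.succAbove 0),
          Fv a (fun y' i' => (starRingEnd ℂ) (b y' i')) (Fin.insertNth 0 l1 y) 0)
        - (∫ y in Set.Icc (AA ∘ Fin.succAbove 0) (BB ∘ Fin.succAbove 0),
          Fv a (fun y' i' => (starRingEnd ℂ) (b y' i')) (Fin.insertNth 0 (0:ℝ) y) 0) = 0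
      rw [hfront0, hback0, sub_zero]
    · show (∫ y in Set.Icc (AA ∘ Fin.succAbove 1) (BB ∘ Fin.succAbove 1),
          Fv a (fun y' i' => (starRingEnd ℂ) (b y' i')) (Fin.insertNth 1 l2 y) 1)
        - (∫ y in Set.Icc (AA ∘ Fin.succAbove 1) (BB ∘ Fin.succAbove 1),
          Fv a (fun y' i' => (starRingEnd ℂ) (b y' i')) (Fin.insertNth 1 (0:ℝ) y) 1) = 0
      rw [hfront1, hback1, sub_zero]
    · show (∫ y in Set.Icc (AA ∘ Fin.succAbove 2) (BB ∘ Fin.succAbove 2),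
          Fv a (fun y' i' => (starRingEnd ℂ) (b y' i')) (Fin.insertNth 2 (T+1) y) 2)
        - (∫ y in Set.Icc (AA ∘ Fin.succAbove 2) (BB ∘ Fin.succAbove 2),
          Fv a (fun y' i' => (starRingEnd ℂ) (b y' i')) (Fin.insertNth 2 (-(T+1)) y) 2) = 0
      rw [hfront2, hback2, sub_zero]
  -- final splitting
  have hI1 : IntegrableOn (fun x => hinner (vcurl a x) (vcurl b x)) (Rect l1 l2) :=
    hIntOn _ hg1c hvan1
  have hI2 : IntegrableOn (fun x => ∑ j, hinner (pdV j a x) (pdV j b x)) (Rect l1 l2) :=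
    hIntOn _ hg2c hvan2
  have hI3 : IntegrableOn (fun x => vdiv a x * (starRingEnd ℂ) (vdiv b x)) (Rect l1 l2) :=
    hIntOn _ hg3c hvan3
  have hI23 : IntegrableOn (fun x => (∑ j, hinner (pdV j a x) (pdV j b x))
      - vdiv a x * (starRingEnd ℂ) (vdiv b x)) (Rect l1 l2) := hI2.sub hI3
  rw [integral_sub hI23 hI1, integral_sub hI2 hI3] at hkey
  linear_combination -hkey

end
end
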